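/- Extrema of the Ising fixed points at the 2D critical coupling (calculus content of Proposition 4): define f(t) = e^t·cosh(t)/(1 + sinh(2t)) and g(t) = e^{−t}·sinh(t)/(1 + sinh(2t)) for t > 0, and let t_c = (1/2)·ln(1+√2). Then for every t > 0 one has f(t) ≥ (2+√2)/4 and g(t) ≤ (2−√2)/4, and at t = t_c equality holds: f(t_c) = (2+√2)/4 and g(t_c) = (2−√2)/4. -/

import Mathlib

/-- The fixed point `π*(0) = e^t·cosh(t)/(1 + sinh(2t))` of the Ising marginal mapping. -/
noncomputable def isingFixed0 (t : ℝ) : ℝ :=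
  Real.exp t * Real.cosh t / (1 + Real.sinh (2 * t))

/-- The fixed point `π*(1) = e^{−t}·sinh(t)/(1 + sinh(2t))` of the Ising marginal mapping. -/
noncomputable def isingFixed1 (t : ℝ) : ℝ :=
  Real.exp (-t) * Real.sinh t / (1 + Real.sinh (2 * t))

lemma exp2t_gt (t : ℝ) (ht : 0 < t) : 1 < Real.exp (2 * t) :=
  Real.one_lt_exp_iff.mpr (by linarith)

lemma fix0_eq (t : ℝ) (ht : 0 < t) :
    isingFixed0 t =
      Real.exp (2 * t) * (Real.exp (2 * t) + 1) /
        (Real.exp (2 * t) ^ 2 + 2 * Real.exp (2 * t) - 1) := by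
  have hs := exp2t_gt t ht
  set E := Real.exp t with hEdef
  have hE : (0:ℝ) < E := Real.exp_pos t
  have h2 : Real.exp (2 * t) = E ^ 2 := by
    rw [two_mul, Real.exp_add]; ring
  have hE1 : 1 < E ^ 2 := h2 ▸ hs
  have hnum : Real.exp t * Real.cosh t = (E ^ 2 + 1) / 2 := by
    rw [Real.cosh_eq, Real.exp_neg, ← hEdef]
    field_simp
  have hden : 1 + Real.sinh (2 * t) = (E ^ 4 + 2 * E ^ 2 - 1) / (2 * E ^ 2) := by
    rw [Real.sinh_eq, Real.exp_neg, h2]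
    field_simp; ring
  have hD : E ^ 4 + 2 * E ^ 2 - 1 ≠ 0 := by nlinarith
  unfold isingFixed0
  rw [hnum, hden, h2, div_div_eq_mul_div]
  ring

lemma fix1_eq (t : ℝ) (ht : 0 < t) :
    isingFixed1 t =
      (Real.exp (2 * t) - 1) /
        (Real.exp (2 * t) ^ 2 + 2 * Real.exp (2 * t) - 1) := by
  have hs := exp2t_gt t ht
  set E := Real.exp t with hEdef
  have hE : (0:ℝ) < E := Real.exp_pos t
  have h2 : Real.exp (2 * t) = E ^ 2 := by
    rw [two_mul, Real.exp_add]; ring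
  have hE1 : 1 < E ^ 2 := h2 ▸ hs
  have hnum : Real.exp (-t) * Real.sinh t = (E ^ 2 - 1) / (2 * E ^ 2) := by
    rw [Real.sinh_eq, Real.exp_neg, ← hEdef]
    field_simp
  have hden : 1 + Real.sinh (2 * t) = (E ^ 4 + 2 * E ^ 2 - 1) / (2 * E ^ 2) := by
    rw [Real.sinh_eq, Real.exp_neg, h2]
    field_simp; ring
  have hD : E ^ 4 + 2 * E ^ 2 - 1 ≠ 0 := by nlinarith
  have hE' : E ≠ 0 := hE.ne'
  unfold isingFixed1
  rw [hnum, hden, h2, div_div_eq_mul_div,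
    div_mul_cancel₀ _ (by positivity : (2:ℝ) * E ^ 2 ≠ 0)]
  ring

lemma quad_key (s : ℝ) : 0 ≤ (2 - Real.sqrt 2) * s ^ 2 - 2 * Real.sqrt 2 * s + (2 + Real.sqrt 2) := by
  have h2 : Real.sqrt 2 ^ 2 = 2 := Real.sq_sqrt (by norm_num)
  have hlt : Real.sqrt 2 < 2 := by
    nlinarith [Real.sqrt_nonneg 2]
  have hpos : (0:ℝ) < 2 - Real.sqrt 2 := by linarith
  nlinarith [sq_nonneg ((2 - Real.sqrt 2) * s - Real.sqrt 2), h2, hpos]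


/-- Proposition 4 (calculus content): on `t > 0`, `π*(0) ≥ (2+√2)/4` and `π*(1) ≤ (2−√2)/4`,
with equality at the 2D Ising critical coupling `t_c = ln(1+√2)/2`. -/
theorem ising_fixed_point_extrema :
    (∀ t : ℝ, 0 < t →
      (2 + Real.sqrt 2) / 4 ≤ isingFixed0 t ∧ isingFixed1 t ≤ (2 - Real.sqrt 2) / 4) ∧
    isingFixed0 (Real.log (1 + Real.sqrt 2) / 2) = (2 + Real.sqrt 2) / 4 ∧
    isingFixed1 (Real.log (1 + Real.sqrt 2) / 2) = (2 - Real.sqrt 2) / 4 := by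
  have h2 : Real.sqrt 2 ^ 2 = 2 := Real.sq_sqrt (by norm_num)
  have h1r : 1 < Real.sqrt 2 := by nlinarith [Real.sqrt_nonneg 2]
  refine ⟨fun t ht => ?_, ?_, ?_⟩
  · have hs := exp2t_gt t ht
    set s := Real.exp (2 * t) with hsdef
    have hD : 0 < s ^ 2 + 2 * s - 1 := by nlinarith
    have hQ := quad_key s
    constructor
    · rw [fix0_eq t ht, ← hsdef, div_le_div_iff₀ (by norm_num) hD]
      nlinarith
    · rw [fix1_eq t ht, ← hsdef, div_le_div_iff₀ hD (by norm_num)]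
      nlinarith
  · have htc : 0 < Real.log (1 + Real.sqrt 2) / 2 := by
      have := Real.log_pos (by linarith : (1:ℝ) < 1 + Real.sqrt 2)
      linarith
    have hexp : Real.exp (2 * (Real.log (1 + Real.sqrt 2) / 2)) = 1 + Real.sqrt 2 := by
      rw [show 2 * (Real.log (1 + Real.sqrt 2) / 2) = Real.log (1 + Real.sqrt 2) by ring,
        Real.exp_log (by positivity)]
    rw [fix0_eq _ htc, hexp]
    have hD : (0:ℝ) < (1 + Real.sqrt 2) ^ 2 + 2 * (1 + Real.sqrt 2) - 1 := by nlinarith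
    rw [div_eq_div_iff hD.ne' (by norm_num)]
    nlinarith
  · have htc : 0 < Real.log (1 + Real.sqrt 2) / 2 := by
      have := Real.log_pos (by linarith : (1:ℝ) < 1 + Real.sqrt 2)
      linarith
    have hexp : Real.exp (2 * (Real.log (1 + Real.sqrt 2) / 2)) = 1 + Real.sqrt 2 := by
      rw [show 2 * (Real.log (1 + Real.sqrt 2) / 2) = Real.log (1 + Real.sqrt 2) by ring,
        Real.exp_log (by positivity)]
    rw [fix1_eq _ htc, hexp]
    have hD : (0:ℝ) < (1 + Real.sqrt 2) ^ 2 + 2 * (1 + Real.sqrt 2) - 1 := by nlinarith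
    rw [div_eq_div_iff hD.ne' (by norm_num)]
    nlinarith
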